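/- Let 𝓗 be a connected hypergraph on H. The map that takes a closed term of sort H over the signature Σ_𝓗 and projects every function symbol (X,Y) occurring in it to its first component X is a bijection from the set of closed terms of sort H over Σ_𝓗 to the set of constructs of 𝓗. -/

import Mathlib

open scoped Classical

noncomputable section

/-! ## Hypergraphs (nestohedra combinatorics), after Curien–Laplante-Anfossi:
hypergraphs, restrictions, connectivity, saturation, reconnected restriction,
constructs/constructions, the face order, the flip rewriting, and terms over the
associated signatures. -/

/-- A hypergraph on a finite vertex set: a finite set of nonempty hyperedges whose union is
the vertex set, assumed atomic (every singleton is a hyperedge). -/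
structure HGraph (α : Type*) [DecidableEq α] where
  verts : Finset α
  edges : Finset (Finset α)
  edges_nonempty : ∀ e ∈ edges, e.Nonempty
  edges_subset : ∀ e ∈ edges, e ⊆ verts
  atomic : ∀ v ∈ verts, {v} ∈ edges

namespace HGraph

variable {α : Type*} [DecidableEq α]

/-- The plain restriction `𝓗_X` of a hypergraph to a subset `X` of its vertices. -/
def restrict (H : HGraph α) (X : Finset α) : HGraph α where
  verts := X ∩ H.verts
  edges := H.edges.filter (· ⊆ X)
  edges_nonempty e he := H.edges_nonempty e (Finset.mem_filter.mp he).1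
  edges_subset e he :=
    Finset.subset_inter (Finset.mem_filter.mp he).2 (H.edges_subset e (Finset.mem_filter.mp he).1)
  atomic v hv := by
    rcases Finset.mem_inter.mp hv with ⟨h1, h2⟩
    exact Finset.mem_filter.mpr ⟨H.atomic v h2, Finset.singleton_subset_iff.mpr h1⟩

/-- A hypergraph is connected if its vertex set is nonempty and admits no nontrivial
partition `X₁ ∪ X₂` such that every edge lies in `X₁` or in `X₂`. -/
def Connected (H : HGraph α) : Prop :=
  H.verts.Nonempty ∧ ∀ X₁ X₂ : Finset α, X₁.Nonempty → X₂.Nonempty →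
    Disjoint X₁ X₂ → X₁ ∪ X₂ = H.verts → ∃ e ∈ H.edges, ¬e ⊆ X₁ ∧ ¬e ⊆ X₂

/-- `C` is (the vertex set of) a connected component of `H`: a maximal connected subset. -/
def IsComponent (H : HGraph α) (C : Finset α) : Prop :=
  C ⊆ H.verts ∧ (H.restrict C).Connected ∧
    ∀ D : Finset α, C ⊆ D → D ⊆ H.verts → (H.restrict D).Connected → D = C

/-- `y` and `z` lie in the same connected component of `H`. -/
def SameComponent (H : HGraph α) (y z : α) : Prop :=
  ∃ C : Finset α, H.IsComponent C ∧ y ∈ C ∧ z ∈ C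

/-- The saturation `Sat(𝓗)`: the set of (nonempty) connected subsets of vertices. -/
def sat (H : HGraph α) : Finset (Finset α) :=
  H.verts.powerset.filter fun X => (H.restrict X).Connected

theorem singleton_connected (H : HGraph α) {v : α} (hv : v ∈ H.verts) :
    (H.restrict {v}).Connected := by
  constructor
  · exact ⟨v, Finset.mem_inter.mpr ⟨Finset.mem_singleton_self v, hv⟩⟩
  · intro X₁ X₂ h₁ h₂ hd hu
    exfalso
    have hv' : ({v} : Finset α) ∩ H.verts = {v} :=
      Finset.inter_eq_left.mpr (Finset.singleton_subset_iff.mpr hv)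
    have hu' : X₁ ∪ X₂ = ({v} : Finset α) := hu.trans hv'
    have hX₁ : X₁ ⊆ {v} := hu' ▸ Finset.subset_union_left
    have hX₂ : X₂ ⊆ {v} := hu' ▸ Finset.subset_union_right
    obtain ⟨a, ha⟩ := h₁
    obtain ⟨b, hb⟩ := h₂
    have ha' := Finset.mem_singleton.mp (hX₁ ha)
    have hb' := Finset.mem_singleton.mp (hX₂ hb)
    subst ha'; exact Finset.disjoint_left.mp hd ha (hb' ▸ hb)

/-- The reconnected restriction `𝓗 ↾ X` of `𝓗` to `X`. -/
def reconRestrict (H : HGraph α) (X : Finset α) : HGraph α where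
  verts := X ∩ H.verts
  edges := (H.sat.image (· ∩ X)).filter (·.Nonempty)
  edges_nonempty e he := (Finset.mem_filter.mp he).2
  edges_subset := by
    intro e he
    rcases Finset.mem_image.mp (Finset.mem_filter.mp he).1 with ⟨Z, hZ, rfl⟩
    have hZv : Z ⊆ H.verts := Finset.mem_powerset.mp (Finset.mem_filter.mp hZ).1
    exact fun a ha => Finset.mem_inter.mpr
      ⟨(Finset.mem_inter.mp ha).2, hZv (Finset.mem_inter.mp ha).1⟩
  atomic := by
    intro v hv
    rcases Finset.mem_inter.mp hv with ⟨h1, h2⟩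
    refine Finset.mem_filter.mpr ⟨Finset.mem_image.mpr ⟨{v}, ?_, ?_⟩, ?_⟩
    · exact Finset.mem_filter.mpr
        ⟨Finset.mem_powerset.mpr (Finset.singleton_subset_iff.mpr h2),
         H.singleton_connected h2⟩
    · exact Finset.inter_eq_left.mpr (Finset.singleton_subset_iff.mpr h1)
    · exact ⟨v, by simp [Finset.inter_eq_left.mpr (Finset.singleton_subset_iff.mpr h1)]⟩

/-- `x ⇝ {y,z}` in `𝓗`: after removing `x`, the vertices `y` and `z` lie in the same
connected component.  Its negation is "`x` disconnects `y` and `z` in `𝓗`". -/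
def Links (H : HGraph α) (x y z : α) : Prop :=
  (H.restrict (H.verts \ {x})).SameComponent y z

/-- A hypergraph is contextual if for every connected subset `Y` of cardinality at least 3
and all distinct `x, y, z ∈ Y`, `x` disconnects `y` and `z` in `𝓗_Y` iff it does in `𝓗`. -/
def Contextual (H : HGraph α) : Prop :=
  ∀ Y : Finset α, Y ⊆ H.verts → (H.restrict Y).Connected → 3 ≤ Y.card →
    ∀ x y z : α, x ∈ Y → y ∈ Y → z ∈ Y → x ≠ y → y ≠ z → x ≠ z →
      ((H.restrict Y).Links x y z ↔ H.Links x y z)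

end HGraph

/-- Finite rooted trees with nodes decorated by finite sets (potential constructs). -/
inductive FTree (α : Type*) : Type _ where
  | node : Finset α → List (FTree α) → FTree α

namespace FTree

variable {α : Type*} [DecidableEq α]

/-- The decoration of the root node. -/
def label : FTree α → Finset α
  | node Y _ => Y

/-- The list of children of the root node. -/
def children : FTree α → List (FTree α)
  | node _ ts => ts

/-- The support of a tree: the union of the decorations of its nodes. -/
def support : FTree α → Finset α
  | node Y [] => Y
  | node Y (t :: ts) => support t ∪ support (node Y ts)

/-- The list of decorations of the nodes of a tree. -/
def labels : FTree α → List (Finset α)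
  | node Y [] => [Y]
  | node Y (t :: ts) => labels t ++ labels (node Y ts)

/-- The dimension of a construct: the sum over its nodes `X` of `|X| - 1`. -/
def dim (T : FTree α) : ℕ := (T.labels.map fun X => X.card - 1).sum

mutual
  /-- The (full) subtree rooted at the node decorated by `X`, if any. -/
  def subtreeAt : FTree α → Finset α → Option (FTree α)
    | node Y ts, X => if Y = X then some (node Y ts) else subtreeAtList ts X
  def subtreeAtList : List (FTree α) → Finset α → Option (FTree α)
    | [], _ => none
    | t :: ts, X => (subtreeAt t X).elim (subtreeAtList ts X) some
end

/-- The support `supp (T ↾ X)` of the subtree rooted at the node decorated by `X`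
(or `∅` if there is no such node). -/
def suppAt (T : FTree α) (X : Finset α) : Finset α :=
  ((T.subtreeAt X).map support).getD ∅

mutual
  /-- The list of supports of the subtrees rooted at the nodes of `T` (its nested set). -/
  def nests : FTree α → List (Finset α)
    | node Y ts => support (node Y ts) :: nestsList ts
  def nestsList : List (FTree α) → List (Finset α)
    | [] => []
    | t :: ts => nests t ++ nestsList ts
end

/-- The nested set of a tree, as a finite set. -/
def nestSet (T : FTree α) : Finset (Finset α) := T.nests.toFinset

/-- `S ≺ T` (`S` is covered by `T`) in the face order: `T` is obtained from `S` by
contracting one edge between a node and its father (equivalently, the nested set of `T`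
is obtained from that of `S` by removing one non-root element). -/
def CoveredBy (S T : FTree α) : Prop :=
  ∃ N ∈ S.nests, N ≠ S.support ∧ T.nestSet = S.nestSet.erase N

/-- The face (subface) order `S ≼ T` on constructs: the reflexive–transitive closure of
the covering relation `≺`. -/
def FaceLe (S T : FTree α) : Prop := Relation.ReflTransGen CoveredBy S T

/-- `IsSubtree S T`: `S` is a (full) subtree of `T`. -/
inductive IsSubtree : FTree α → FTree α → Prop
  | refl (t : FTree α) : IsSubtree t t
  | child {s t u : FTree α} : IsSubtree s t → t ∈ u.children → IsSubtree s u

/-- In `T`, the node decorated by `X` has a child decorated by `Y`. -/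
def ParentChild (X Y : Finset α) (T : FTree α) : Prop :=
  ∃ R : FTree α, IsSubtree R T ∧ R.label = X ∧ ∃ t ∈ R.children, t.label = Y

mutual
  /-- Pruning: remove all (subtrees rooted at) nodes whose decoration is not a subset
  of `X`, keeping the root. -/
  def prune (X : Finset α) : FTree α → FTree α
    | node Y ts => node Y (pruneList X ts)
  def pruneList (X : Finset α) : List (FTree α) → List (FTree α)
    | [] => []
    | t :: ts => if t.label ⊆ X then prune X t :: pruneList X ts else pruneList X ts
end

end FTree

/-- `IsConstruct H T`: the tree `T` is a construct of the hypergraph `H`: its root `Y` is a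
nonempty subset of the vertices, its children are constructs of the connected components of
`𝓗 ∖ Y` (one for each component, listed by increasing maximal vertex). -/
inductive IsConstruct {α : Type*} [LinearOrder α] : HGraph α → FTree α → Prop
  | node {H : HGraph α} (Y : Finset α) (ts : List (FTree α))
      (hY : Y.Nonempty) (hYsub : Y ⊆ H.verts)
      (hmem : ∀ t ∈ ts, (H.restrict (H.verts \ Y)).IsComponent t.support)
      (hcover : ∀ C : Finset α, (H.restrict (H.verts \ Y)).IsComponent C →
        ∃ t ∈ ts, t.support = C)
      (hsorted : ts.Pairwise fun a b => a.support.max < b.support.max)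
      (hchild : ∀ t ∈ ts, IsConstruct (H.restrict t.support) t) :
      IsConstruct H (FTree.node Y ts)

section ConstructionOrder

variable {α : Type*} [LinearOrder α]

/-- A construction: a construct all of whose nodes are singletons (a vertex of the
nestohedron). -/
def IsConstruction (H : HGraph α) (T : FTree α) : Prop :=
  IsConstruct H T ∧ ∀ X ∈ T.labels, X.card = 1

/-- An `X`-face: a 2-dimensional construct whose unique non-singleton node is decorated
by `X`, of cardinality 3. -/
def IsXFace (H : HGraph α) (X : Finset α) (T : FTree α) : Prop :=
  IsConstruct H T ∧ X.card = 3 ∧ X ∈ T.labels ∧ ∀ Y ∈ T.labels, Y ≠ X → Y.card = 1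

/-- Two distinct constructions are joined by an edge of the nestohedron: both are covered
by a common 1-dimensional construct. -/
def EdgeJoined (H : HGraph α) (S T : FTree α) : Prop :=
  IsConstruction H S ∧ IsConstruction H T ∧ S ≠ T ∧
  ∃ V : FTree α, IsConstruct H V ∧ V.dim = 1 ∧ FTree.CoveredBy S V ∧ FTree.CoveredBy T V

/-- The flip rewriting relation `S → T` on constructions of an ordered hypergraph:
`S` and `T` are the two endpoints of an edge whose 1-dimensional face has unique
non-singleton node `{x, y}` with `x < y`, and in `S` the node `{x}` is the parent of the
node `{y}`. -/
def Flip (H : HGraph α) (S T : FTree α) : Prop :=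
  IsConstruction H S ∧ IsConstruction H T ∧ S ≠ T ∧
  ∃ (V : FTree α) (x y : α), IsConstruct H V ∧ V.dim = 1 ∧ x ≠ y ∧
    ({x, y} : Finset α) ∈ V.labels ∧ FTree.CoveredBy S V ∧ FTree.CoveredBy T V ∧
    FTree.ParentChild ({x} : Finset α) ({y} : Finset α) S ∧ x < y

/-- The coordinate vector of a construction `S` of `H`:
`v^S_x = |{e ∈ Sat(𝓗) : x ∈ e ⊆ supp (S ↾ x)}|`. -/
def coordVec (H : HGraph α) (S : FTree α) (x : α) : ℕ :=
  (H.sat.filter fun e => x ∈ e ∧ e ⊆ S.suppAt {x}).card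

end ConstructionOrder

/-- Raw terms over the signature `Σ_𝓗` (and `Σ^c_𝓗`): variables are (connected) subsets,
function symbols are pairs `(X, Y)` of subsets, applied to a list of arguments. -/
inductive HTerm (α : Type*) : Type _ where
  | var : Finset α → HTerm α
  | app : Finset α → Finset α → List (HTerm α) → HTerm α

namespace HTerm

variable {α : Type*} [DecidableEq α]

/-- The (output) sort of a term. -/
def sortOf : HTerm α → Finset α
  | var A => A
  | app _ Y _ => Y

/-- The list of variables occurring in a term. -/
def varsList : HTerm α → List (Finset α)
  | var A => [A]
  | app _ _ [] => []
  | app X Y (t :: ts) => varsList t ++ varsList (app X Y ts)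

/-- The list of first components of the function symbols occurring in a term. -/
def appFirsts : HTerm α → List (Finset α)
  | var _ => []
  | app X _ [] => [X]
  | app X Y (t :: ts) => appFirsts t ++ appFirsts (app X Y ts)

/-- A term is closed if it contains no variables. -/
def Closed (t : HTerm α) : Prop := t.varsList = []

/-- The union `⋃ var(t)` of the variables of a term. -/
def varsUnion (t : HTerm α) : Finset α := t.varsList.foldr (· ∪ ·) ∅

mutual
  /-- Projection of a term to a decorated tree: every function symbol `(X, Y)` is sent to
  its first component `X`, and all variables are pruned. -/
  def toTree : HTerm α → FTree α
    | .var A => .node A []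
    | .app X _ ts => .node X (toTreeList ts)
  def toTreeList : List (HTerm α) → List (FTree α)
    | [] => []
    | .var _ :: ts => toTreeList ts
    | t :: ts => toTree t :: toTreeList ts
end

end HTerm

/-- Well-formed terms over the signature `Σ_𝓗` associated with the hypergraph `H`:
a variable is a connected subset (its own sort); a function symbol `(X, Y)` (with
`∅ ≠ X ⊆ Y ⊆ H` and `Y` connected) is applied to arguments whose sorts are exactly the
connected components of `𝓗_Y ∖ X`, listed by increasing maximal vertex. -/
inductive IsTerm {α : Type*} [LinearOrder α] (H : HGraph α) : HTerm α → Prop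
  | var (A : Finset α) : A ⊆ H.verts → (H.restrict A).Connected → IsTerm H (.var A)
  | app (X Y : Finset α) (ts : List (HTerm α)) :
      X.Nonempty → X ⊆ Y → Y ⊆ H.verts → (H.restrict Y).Connected →
      (∀ t ∈ ts, (H.restrict (Y \ X)).IsComponent t.sortOf) →
      (∀ C : Finset α, (H.restrict (Y \ X)).IsComponent C → ∃ t ∈ ts, t.sortOf = C) →
      ts.Pairwise (fun a b => a.sortOf.max < b.sortOf.max) →
      (∀ t ∈ ts, IsTerm H t) →
      IsTerm H (.app X Y ts)


section Stmt4Aux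

variable {α : Type*} [LinearOrder α]

theorem HGraph.ext' {H1 H2 : HGraph α} (hv : H1.verts = H2.verts)
    (he : H1.edges = H2.edges) : H1 = H2 := by
  cases H1; cases H2; simp_all

theorem restrict_verts' (H : HGraph α) {X : Finset α} (hX : X ⊆ H.verts) :
    (H.restrict X).verts = X := Finset.inter_eq_left.mpr hX

theorem restrict_restrict' (H : HGraph α) {Y Z : Finset α} (h : Z ⊆ Y) :
    (H.restrict Y).restrict Z = H.restrict Z := by
  apply HGraph.ext'
  · show Z ∩ (Y ∩ H.verts) = Z ∩ H.verts
    rw [← Finset.inter_assoc, Finset.inter_eq_left.mpr h]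
  · show ((H.edges.filter (· ⊆ Y)).filter (· ⊆ Z)) = H.edges.filter (· ⊆ Z)
    rw [Finset.filter_filter]
    exact Finset.filter_congr fun e _ => by
      constructor
      · exact fun ⟨_, h2⟩ => h2
      · exact fun h2 => ⟨h2.trans h, h2⟩

theorem restrict_self' (H : HGraph α) : H.restrict H.verts = H := by
  apply HGraph.ext'
  · exact Finset.inter_self _
  · exact Finset.filter_true_of_mem H.edges_subset

theorem exists_component' (G : HGraph α) {v : α} (hv : v ∈ G.verts) :
    ∃ C, G.IsComponent C ∧ v ∈ C := by
  have hne : (G.verts.powerset.filter fun D => v ∈ D ∧ (G.restrict D).Connected).Nonempty :=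
    ⟨{v}, Finset.mem_filter.mpr ⟨Finset.mem_powerset.mpr (Finset.singleton_subset_iff.mpr hv),
      Finset.mem_singleton_self v, G.singleton_connected hv⟩⟩
  obtain ⟨C, hC, hmax⟩ := Finset.exists_max_image _ Finset.card hne
  rw [Finset.mem_filter] at hC
  refine ⟨C, ⟨Finset.mem_powerset.mp hC.1, hC.2.2, fun D hCD hDv hDc => ?_⟩, hC.2.1⟩
  have hD : D ∈ G.verts.powerset.filter fun D => v ∈ D ∧ (G.restrict D).Connected :=
    Finset.mem_filter.mpr ⟨Finset.mem_powerset.mpr hDv, hCD hC.2.1, hDc⟩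
  exact (Finset.eq_of_subset_of_card_le hCD (hmax D hD)).symm

theorem mem_support_node {a : α} (X : Finset α) (L : List (FTree α)) :
    a ∈ FTree.support (.node X L) ↔ a ∈ X ∨ ∃ t ∈ L, a ∈ t.support := by
  induction L with
  | nil => simp [FTree.support]
  | cons t ts ih =>
    rw [FTree.support]
    simp only [Finset.mem_union, ih, List.mem_cons]
    constructor
    · rintro (h | h | ⟨u, hu, hau⟩)
      · exact Or.inr ⟨t, Or.inl rfl, h⟩
      · exact Or.inl h
      · exact Or.inr ⟨u, Or.inr hu, hau⟩
    · rintro (h | ⟨u, rfl | hu, hau⟩)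
      · exact Or.inr (Or.inl h)
      · exact Or.inl hau
      · exact Or.inr (Or.inr ⟨u, hu, hau⟩)

theorem construct_support {G : HGraph α} {T : FTree α} (h : IsConstruct G T) :
    T.support = G.verts := by
  cases h with
  | node Y ts hY hYsub hmem hcover hsorted hchild =>
    ext a
    rw [mem_support_node]
    constructor
    · rintro (h | ⟨t, ht, hat⟩)
      · exact hYsub h
      · have := (hmem t ht).1 hat
        exact (Finset.mem_inter.mp this).2
    · intro ha
      by_cases hY' : a ∈ Y
      · exact Or.inl hY'
      · have ha' : a ∈ (G.restrict (G.verts \ Y)).verts :=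
          Finset.mem_inter.mpr ⟨Finset.mem_sdiff.mpr ⟨ha, hY'⟩, ha⟩
        obtain ⟨C, hC, haC⟩ := exists_component' _ ha'
        obtain ⟨t, ht, hts⟩ := hcover C hC
        exact Or.inr ⟨t, ht, hts ▸ haC⟩

theorem closed_app_iff (X Y : Finset α) (l : List (HTerm α)) :
    HTerm.Closed (.app X Y l) ↔ ∀ t ∈ l, t.Closed := by
  induction l with
  | nil => simp [HTerm.Closed, HTerm.varsList]
  | cons t ts ih =>
    unfold HTerm.Closed
    rw [HTerm.varsList]
    simp only [List.append_eq_nil_iff, List.mem_cons]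
    constructor
    · rintro ⟨h1, h2⟩ u (rfl | hu)
      · exact h1
      · exact ih.mp h2 u hu
    · intro h
      exact ⟨h t (Or.inl rfl), ih.mpr fun u hu => h u (Or.inr hu)⟩

theorem toTreeList_eq_map (l : List (HTerm α)) (h : ∀ t ∈ l, t.Closed) :
    HTerm.toTreeList l = l.map HTerm.toTree := by
  induction l with
  | nil => rfl
  | cons t ts ih =>
    cases t with
    | var A =>
      exact absurd (h _ (List.mem_cons_self)) (by simp [HTerm.Closed, HTerm.varsList])
    | app X Y us =>
      rw [HTerm.toTreeList]
      · rw [ih fun u hu => h u (List.mem_cons_of_mem _ hu), List.map_cons]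
      · simp

/-- Forward direction: closed well-formed terms project to constructs. -/
theorem forward_aux (H : HGraph α) :
    ∀ n (t : HTerm α), sizeOf t < n → IsTerm H t → t.Closed →
      (HTerm.toTree t).support = t.sortOf ∧
        IsConstruct (H.restrict t.sortOf) (HTerm.toTree t) := by
  intro n
  induction n with
  | zero => intro t h; omega
  | succ n ih =>
    intro t hsz hterm hclosed
    cases hterm with
    | var A hA hAc =>
      exact absurd hclosed (by simp [HTerm.Closed, HTerm.varsList])
    | app X Y ts hX hXY hYH hYc hmem hcover hsorted hchild =>
      have hclosed' : ∀ u ∈ ts, HTerm.Closed u := (closed_app_iff X Y ts).mp hclosed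
      have hszc : ∀ u ∈ ts, sizeOf u < n := by
        intro u hu
        have h1 := List.sizeOf_lt_of_mem hu
        have h2 : sizeOf (HTerm.app X Y ts) = 1 + sizeOf X + sizeOf Y + sizeOf ts := by simp
        omega
      have IH : ∀ u ∈ ts, (HTerm.toTree u).support = u.sortOf ∧
          IsConstruct (H.restrict u.sortOf) (HTerm.toTree u) :=
        fun u hu => ih u (hszc u hu) (hchild u hu) (hclosed' u hu)
      have htl : HTerm.toTreeList ts = ts.map HTerm.toTree := toTreeList_eq_map ts hclosed'
      have htt : HTerm.toTree (.app X Y ts) = FTree.node X (ts.map HTerm.toTree) := by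
        rw [HTerm.toTree, htl]
      have hYX : Y \ X ⊆ Y := Finset.sdiff_subset
      have hvertsYX : (H.restrict (Y \ X)).verts = Y \ X :=
        restrict_verts' H (hYX.trans hYH)
      have hcompsub : ∀ u ∈ ts, u.sortOf ⊆ Y \ X := by
        intro u hu
        exact ((hmem u hu).1).trans (le_of_eq hvertsYX)
      -- support
      have hsup : (HTerm.toTree (.app X Y ts)).support = Y := by
        rw [htt]
        ext a
        rw [mem_support_node]
        constructor
        · rintro (h | ⟨t', ht', hat'⟩)
          · exact hXY h
          · obtain ⟨u, hu, rfl⟩ := List.mem_map.mp ht'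
            exact hYX (hcompsub u hu ((IH u hu).1 ▸ hat'))
        · intro ha
          by_cases hX' : a ∈ X
          · exact Or.inl hX'
          · have ha' : a ∈ (H.restrict (Y \ X)).verts := by
              rw [hvertsYX]; exact Finset.mem_sdiff.mpr ⟨ha, hX'⟩
            obtain ⟨C, hC, haC⟩ := exists_component' _ ha'
            obtain ⟨u, hu, hus⟩ := hcover C hC
            exact Or.inr ⟨HTerm.toTree u, List.mem_map_of_mem hu,
              by rw [(IH u hu).1, hus]; exact haC⟩
      constructor
      · exact hsup
      · show IsConstruct (H.restrict Y) _
        rw [htt]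
        have hvY : (H.restrict Y).verts = Y := restrict_verts' H hYH
        have hrr : (H.restrict Y).restrict ((H.restrict Y).verts \ X) = H.restrict (Y \ X) := by
          rw [hvY]; exact restrict_restrict' H hYX
        refine IsConstruct.node X (ts.map HTerm.toTree) hX (by rw [hvY]; exact hXY) ?_ ?_ ?_ ?_
        · intro t' ht'
          obtain ⟨u, hu, rfl⟩ := List.mem_map.mp ht'
          rw [hrr, (IH u hu).1]
          exact hmem u hu
        · intro C hC
          rw [hrr] at hC
          obtain ⟨u, hu, hus⟩ := hcover C hC
          exact ⟨HTerm.toTree u, List.mem_map_of_mem hu, by rw [(IH u hu).1, hus]⟩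
        · rw [List.pairwise_map]
          exact hsorted.imp_of_mem fun {a b} ha hb h => by
            rwa [(IH a ha).1, (IH b hb).1]
        · intro t' ht'
          obtain ⟨u, hu, rfl⟩ := List.mem_map.mp ht'
          rw [(IH u hu).1, restrict_restrict' H ((hcompsub u hu).trans hYX)]
          exact (IH u hu).2

/-- Injectivity. -/
theorem inj_aux (H : HGraph α) :
    ∀ n (t1 t2 : HTerm α), sizeOf t1 < n → IsTerm H t1 → t1.Closed →
      IsTerm H t2 → t2.Closed → t1.sortOf = t2.sortOf →
      HTerm.toTree t1 = HTerm.toTree t2 → t1 = t2 := by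
  intro n
  induction n with
  | zero => intro t1 t2 h; omega
  | succ n ih =>
    intro t1 t2 hsz h1 hc1 h2 hc2 hsort htree
    cases t1 with
    | var A => exact absurd hc1 (by simp [HTerm.Closed, HTerm.varsList])
    | app X1 Y1 l1 =>
      cases t2 with
      | var A => exact absurd hc2 (by simp [HTerm.Closed, HTerm.varsList])
      | app X2 Y2 l2 =>
        have hY : Y1 = Y2 := hsort
        have hc1' : ∀ u ∈ l1, HTerm.Closed u := (closed_app_iff _ _ _).mp hc1
        have hc2' : ∀ u ∈ l2, HTerm.Closed u := (closed_app_iff _ _ _).mp hc2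
        have h1' : ∀ u ∈ l1, IsTerm H u := by cases h1; assumption
        have h2' : ∀ u ∈ l2, IsTerm H u := by cases h2; assumption
        have htree' : FTree.node X1 (l1.map HTerm.toTree)
            = FTree.node X2 (l2.map HTerm.toTree) := by
          rw [← toTreeList_eq_map l1 hc1', ← toTreeList_eq_map l2 hc2']
          rw [show FTree.node X1 (HTerm.toTreeList l1) = HTerm.toTree (.app X1 Y1 l1) from
            (HTerm.toTree.eq_2 _ _ _).symm,
            show FTree.node X2 (HTerm.toTreeList l2) = HTerm.toTree (.app X2 Y2 l2) from
            (HTerm.toTree.eq_2 _ _ _).symm]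
          exact htree
        rw [FTree.node.injEq] at htree'
        have hszc : ∀ u ∈ l1, sizeOf u < n := by
          intro u hu
          have hm := List.sizeOf_lt_of_mem hu
          have hs : sizeOf (HTerm.app X1 Y1 l1) = 1 + sizeOf X1 + sizeOf Y1 + sizeOf l1 := by simp
          omega
        have key : ∀ (m1 : List (HTerm α)), (∀ u ∈ m1, sizeOf u < n) →
            (∀ u ∈ m1, IsTerm H u) → (∀ u ∈ m1, u.Closed) →
            ∀ (m2 : List (HTerm α)), (∀ u ∈ m2, IsTerm H u) → (∀ u ∈ m2, u.Closed) →
            m1.map HTerm.toTree = m2.map HTerm.toTree → m1 = m2 := by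
          intro m1
          induction m1 with
          | nil =>
            intro _ _ _ m2 _ _ hmap
            cases m2 with
            | nil => rfl
            | cons b m2 => simp at hmap
          | cons a m1 ihl =>
            intro hsz' ht1 hcl1 m2 ht2 hcl2 hmap
            cases m2 with
            | nil => simp at hmap
            | cons b m2 =>
              simp only [List.map_cons, List.cons.injEq] at hmap
              have hsab : a.sortOf = b.sortOf := by
                rw [← (forward_aux H (sizeOf a + 1) a (by omega)
                    (ht1 a (List.mem_cons_self)) (hcl1 a (List.mem_cons_self))).1,
                  ← (forward_aux H (sizeOf b + 1) b (by omega)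
                    (ht2 b (List.mem_cons_self)) (hcl2 b (List.mem_cons_self))).1, hmap.1]
              have hab : a = b := ih a b (hsz' a (List.mem_cons_self))
                (ht1 a (List.mem_cons_self)) (hcl1 a (List.mem_cons_self))
                (ht2 b (List.mem_cons_self)) (hcl2 b (List.mem_cons_self)) hsab hmap.1
              rw [hab, ihl (fun u hu => hsz' u (List.mem_cons_of_mem _ hu))
                (fun u hu => ht1 u (List.mem_cons_of_mem _ hu))
                (fun u hu => hcl1 u (List.mem_cons_of_mem _ hu)) m2
                (fun u hu => ht2 u (List.mem_cons_of_mem _ hu))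
                (fun u hu => hcl2 u (List.mem_cons_of_mem _ hu)) hmap.2]
        have hl : l1 = l2 := key l1 hszc h1' hc1' l2 h2' hc2' htree'.2
        rw [htree'.1, hY, hl]

/-- The inverse map: a construct yields a term. -/
def termOf : FTree α → HTerm α
  | .node Y ts => .app Y (FTree.support (.node Y ts)) (ts.attach.map fun ⟨t, _⟩ => termOf t)
termination_by t => sizeOf t
decreasing_by
  have := List.sizeOf_lt_of_mem ‹_›
  simp only [FTree.node.sizeOf_spec]
  omega

theorem termOf_node (Y : Finset α) (ts : List (FTree α)) :
    termOf (FTree.node Y ts) = .app Y (FTree.support (.node Y ts)) (ts.map termOf) := by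
  rw [termOf]
  congr 1
  simp [List.attach_map_val]

theorem surj_aux (H : HGraph α) :
    ∀ n (T : FTree α) (S : Finset α), sizeOf T < n → S ⊆ H.verts →
      (H.restrict S).Connected → IsConstruct (H.restrict S) T →
      IsTerm H (termOf T) ∧ (termOf T).sortOf = S ∧ (termOf T).Closed ∧
        HTerm.toTree (termOf T) = T := by
  intro n
  induction n with
  | zero => intro T S h; omega
  | succ n ih =>
    intro T S hsz hSH hSc hcon
    cases hcon with
    | node Y ts hY hYsub hmem hcover hsorted hchild =>
      have hvS : (H.restrict S).verts = S := restrict_verts' H hSH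
      have hYS : Y ⊆ S := hvS ▸ hYsub
      have hsupS : FTree.support (FTree.node Y ts) = S := by
        rw [construct_support (IsConstruct.node Y ts hY hYsub hmem hcover hsorted hchild), hvS]
      have hrr : (H.restrict S).restrict ((H.restrict S).verts \ Y) = H.restrict (S \ Y) := by
        rw [hvS]; exact restrict_restrict' H Finset.sdiff_subset
      have hcompsub : ∀ t ∈ ts, t.support ⊆ S \ Y := by
        intro t ht
        have := (hmem t ht).1
        rw [hrr, restrict_verts' H (Finset.sdiff_subset.trans hSH)] at this
        exact this
      have hszc : ∀ t ∈ ts, sizeOf t < n := by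
        intro t ht
        have hm := List.sizeOf_lt_of_mem ht
        have h2 : sizeOf (FTree.node Y ts) = 1 + sizeOf Y + sizeOf ts := by simp
        omega
      have IH : ∀ t ∈ ts, IsTerm H (termOf t) ∧ (termOf t).sortOf = t.support ∧
          (termOf t).Closed ∧ HTerm.toTree (termOf t) = t := by
        intro t ht
        have hsub : t.support ⊆ H.verts := (hcompsub t ht).trans (Finset.sdiff_subset.trans hSH)
        have hconn : (H.restrict t.support).Connected := by
          have := (hmem t ht).2.1
          rwa [hrr, restrict_restrict' H (hcompsub t ht)] at this
        have hc : IsConstruct (H.restrict t.support) t := by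
          have := hchild t ht
          rwa [restrict_restrict' H ((hcompsub t ht).trans Finset.sdiff_subset)] at this
        exact ih t t.support (hszc t ht) hsub hconn hc
      rw [termOf_node, hsupS]
      have hclosed : HTerm.Closed (.app Y S (ts.map termOf)) := by
        rw [closed_app_iff]
        intro u hu
        obtain ⟨t, ht, rfl⟩ := List.mem_map.mp hu
        exact (IH t ht).2.2.1
      refine ⟨?_, rfl, hclosed, ?_⟩
      · refine IsTerm.app Y S (ts.map termOf) hY hYS hSH hSc ?_ ?_ ?_ ?_
        · intro u hu
          obtain ⟨t, ht, rfl⟩ := List.mem_map.mp hu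
          rw [(IH t ht).2.1, ← hrr]
          exact hmem t ht
        · intro C hC
          rw [← hrr] at hC
          obtain ⟨t, ht, hts⟩ := hcover C hC
          exact ⟨termOf t, List.mem_map_of_mem ht, by rw [(IH t ht).2.1, hts]⟩
        · rw [List.pairwise_map]
          exact hsorted.imp_of_mem fun {a b} ha hb h => by
            rwa [(IH a ha).2.1, (IH b hb).2.1]
        · intro u hu
          obtain ⟨t, ht, rfl⟩ := List.mem_map.mp hu
          exact (IH t ht).1
      · have : HTerm.toTree (.app Y S (ts.map termOf)) =
            FTree.node Y (HTerm.toTreeList (ts.map termOf)) := by rw [HTerm.toTree]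
        rw [this, toTreeList_eq_map _ (fun u hu => by
          obtain ⟨t, ht, rfl⟩ := List.mem_map.mp hu; exact (IH t ht).2.2.1)]
        rw [List.map_map]
        have : ts.map (HTerm.toTree ∘ termOf) = ts.map id :=
          List.map_congr_left fun t ht => (IH t ht).2.2.2
        rw [this, List.map_id]

end Stmt4Aux

/-- Lemma `l:bijection-terms`.  Projecting every function symbol `(X,Y)`
to its first component is a bijection from the set of closed terms of sort `H` over `Σ_𝓗`
to the set of constructs of `𝓗`. -/
theorem stmt4 {α : Type*} [LinearOrder α] (H : HGraph α) (hH : H.Connected) :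
    Set.BijOn HTerm.toTree
      {t : HTerm α | IsTerm H t ∧ t.sortOf = H.verts ∧ t.Closed}
      {T : FTree α | IsConstruct H T} := by
  refine ⟨?_, ?_, ?_⟩
  · rintro t ⟨ht, hsort, hcl⟩
    have := (forward_aux H (sizeOf t + 1) t (by omega) ht hcl).2
    rw [hsort, restrict_self'] at this
    exact this
  · rintro t1 ⟨h1, hs1, hc1⟩ t2 ⟨h2, hs2, hc2⟩ htree
    exact inj_aux H (sizeOf t1 + 1) t1 t2 (by omega) h1 hc1 h2 hc2 (hs1.trans hs2.symm) htree
  · rintro T hT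
    have hcon : IsConstruct (H.restrict H.verts) T := by rwa [restrict_self']
    have hconn : (H.restrict H.verts).Connected := by rwa [restrict_self']
    obtain ⟨ht, hsort, hcl, htree⟩ :=
      surj_aux H (sizeOf T + 1) T H.verts (by omega) (le_refl _) hconn hcon
    exact ⟨termOf T, ⟨ht, hsort, hcl⟩, htree⟩

end
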